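/- Let d ≥ 1, α ∈ (0,2), let ℓ:(0,2)→(0,∞) be measurable, slowly varying at 0, and bounded away from 0 and ∞ on every compact subinterval of (0,2), let η ∈ ℝ^d with |η| = 1 and θ ∈ (0, π/2]. Then there exists a constant c > 0 such that for every r ∈ (0, 1/4): ∫_{{h : 2r ≤ |h| ≤ 1 and |⟨h,η⟩| ≥ cos θ · |h|}} ℓ(|h|) |h|^{-d-α} dh ≥ c · ℓ(r)/r^α. -/

import Mathlib

open MeasureTheory Topology Filter Pointwise

set_option maxHeartbeats 1000000

section ConeAux

variable {d : ℕ}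

local notation "E" => EuclideanSpace ℝ (Fin d)

/-- Auxiliary cone-annulus set. -/
def coneAnn (η : EuclideanSpace ℝ (Fin d)) (θ a b : ℝ) : Set (EuclideanSpace ℝ (Fin d)) :=
  {h | a ≤ ‖h‖} ∩ {h | ‖h‖ ≤ b} ∩ {h | Real.cos θ * ‖h‖ ≤ |(inner ℝ h η : ℝ)|}

lemma coneAnn_mem {η : E} {θ a b : ℝ} {h : E} :
    h ∈ coneAnn η θ a b ↔ a ≤ ‖h‖ ∧ ‖h‖ ≤ b ∧ Real.cos θ * ‖h‖ ≤ |(inner ℝ h η : ℝ)| := by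
  simp [coneAnn, Set.mem_setOf_eq, and_assoc]

lemma coneAnn_closed (η : E) (θ a b : ℝ) : IsClosed (coneAnn η θ a b) := by
  have hc : Continuous fun h : E => |(inner ℝ h η : ℝ)| :=
    (continuous_id.inner continuous_const).abs
  exact ((isClosed_le continuous_const continuous_norm).inter
    (isClosed_le continuous_norm continuous_const)).inter
    (isClosed_le (continuous_const.mul continuous_norm) hc)

lemma coneAnn_meas (η : E) (θ a b : ℝ) : MeasurableSet (coneAnn η θ a b) :=
  (coneAnn_closed η θ a b).measurableSet

lemma coneAnn_subset_ball (η : E) (θ a b : ℝ) :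
    coneAnn η θ a b ⊆ Metric.closedBall 0 b := fun h hh =>
  mem_closedBall_zero_iff.2 (coneAnn_mem.1 hh).2.1

lemma coneAnn_vol_ne_top (η : E) (θ a b : ℝ) :
    volume (coneAnn η θ a b) ≠ ⊤ :=
  ((measure_mono (coneAnn_subset_ball η θ a b)).trans_lt measure_closedBall_lt_top).ne

lemma coneAnn_vol_pos (η : E) (hη : ‖η‖ = 1) {θ : ℝ} (hθ0 : 0 < θ)
    (hθπ : θ ≤ Real.pi / 2) {a b : ℝ} (ha : 0 ≤ a) (hab : a < b) :
    0 < volume (coneAnn η θ a b) := by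
  have hcos1 : Real.cos θ < 1 := by
    have := Real.cos_lt_cos_of_nonneg_of_le_pi (le_refl (0:ℝ))
      (hθπ.trans (by linarith [Real.pi_pos])) hθ0
    simpa using this
  set U : Set E := ({h | a < ‖h‖} ∩ {h | ‖h‖ < b}) ∩
      {h | Real.cos θ * ‖h‖ < |(inner ℝ h η : ℝ)|} with hU
  have hUopen : IsOpen U := by
    have hc : Continuous fun h : E => |(inner ℝ h η : ℝ)| :=
      (continuous_id.inner continuous_const).abs
    exact ((isOpen_lt continuous_const continuous_norm).inter
      (isOpen_lt continuous_norm continuous_const)).inter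
      (isOpen_lt (continuous_const.mul continuous_norm) hc)
  have hmid : (a + b) / 2 > 0 := by linarith
  have hUne : U.Nonempty := by
    have hn : ‖((a + b) / 2) • η‖ = (a + b) / 2 := by
      rw [norm_smul, hη, mul_one, Real.norm_eq_abs, abs_of_pos hmid]
    refine ⟨((a + b) / 2) • η, ?_, ?_⟩
    · constructor
      · simp only [Set.mem_setOf_eq, hn]; linarith
      · simp only [Set.mem_setOf_eq, hn]; linarith
    · have hinner : (inner ℝ (((a + b) / 2) • η) η : ℝ) = (a + b) / 2 := by
        rw [real_inner_smul_left, real_inner_self_eq_norm_sq, hη]; ring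
      simp only [Set.mem_setOf_eq, hinner, hn]
      rw [abs_of_pos hmid]
      nlinarith
  have hsub : U ⊆ coneAnn η θ a b := fun h hh =>
    coneAnn_mem.2 ⟨hh.1.1.le, hh.1.2.le, hh.2.le⟩
  exact lt_of_lt_of_le (hUopen.measure_pos volume hUne) (measure_mono hsub)

end ConeAux

/-- Cone lower bound: there is `c > 0` such that for every `r ∈ (0,1/4)`,
`∫_{2r ≤ |h| ≤ 1, |⟨h,η⟩| ≥ cos θ |h|} ℓ(|h|) |h|^{-d-α} dh ≥ c ℓ(r)/r^α`. -/
theorem stmt_9 (d : ℕ) (hd : 1 ≤ d) (α : ℝ) (hα : α ∈ Set.Ioo (0:ℝ) 2)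
    (ℓ : ℝ → ℝ) (hmeas : Measurable ℓ)
    (hpos : ∀ t ∈ Set.Ioo (0:ℝ) 2, 0 < ℓ t)
    (hslow : ∀ lam : ℝ, 0 < lam →
      Tendsto (fun r => ℓ (lam * r) / ℓ r) (𝓝[>] (0:ℝ)) (𝓝 1))
    (hbdd : ∀ a b : ℝ, 0 < a → b < 2 → ∃ m M : ℝ, 0 < m ∧
      ∀ t ∈ Set.Icc a b, m ≤ ℓ t ∧ ℓ t ≤ M)
    (η : EuclideanSpace ℝ (Fin d)) (hη : ‖η‖ = 1)
    (θ : ℝ) (hθ : θ ∈ Set.Ioc (0:ℝ) (Real.pi / 2)) :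
    ∃ c : ℝ, 0 < c ∧ ∀ r ∈ Set.Ioo (0:ℝ) (1/4),
      c * (ℓ r / r ^ α) ≤
        ∫ h in {h : EuclideanSpace ℝ (Fin d) |
            2 * r ≤ ‖h‖ ∧ ‖h‖ ≤ 1 ∧ Real.cos θ * ‖h‖ ≤ |(inner ℝ h η : ℝ)|},
          ℓ ‖h‖ * ‖h‖ ^ (-(d:ℝ) - α) := by
  obtain ⟨hα0, hα2⟩ := hα
  obtain ⟨hθ0, hθπ⟩ := hθ
  set p : ℝ := -(d:ℝ) - α with hp
  have hpneg : p ≤ 0 := by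
    have : (0:ℝ) ≤ (d:ℝ) := Nat.cast_nonneg d
    simp only [hp]; linarith
  set f : EuclideanSpace ℝ (Fin d) → ℝ := fun h => ℓ ‖h‖ * ‖h‖ ^ p with hf
  have hmpow : Measurable fun x : ℝ => x ^ p := by measurability
  have hfmeas : Measurable f :=
    (hmeas.comp measurable_norm).mul (hmpow.comp measurable_norm)
  -- integrability helper
  have hIntOn : ∀ (g : EuclideanSpace ℝ (Fin d) → ℝ) (S : Set (EuclideanSpace ℝ (Fin d)))
      (b C : ℝ), Measurable g → MeasurableSet S → S ⊆ Metric.closedBall 0 b →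
      (∀ x ∈ S, |g x| ≤ C) → IntegrableOn g S volume := by
    intro g S b C hg hS hSb hb
    refine Measure.integrableOn_of_bounded (M := C)
      (((measure_mono hSb).trans_lt measure_closedBall_lt_top).ne)
      hg.aestronglyMeasurable ?_
    exact (ae_restrict_iff' hS).2 (ae_of_all _ fun x hx => by simpa using hb x hx)
  -- positivity of ℓ at relevant points
  have hℓpos : ∀ t : ℝ, 0 < t → t ≤ 1 → 0 < ℓ t := fun t ht ht1 =>
    hpos t ⟨ht, by linarith⟩
  -- integrability of f on any coneAnn with positive inner radius ≤ 1 outer radius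
  have hfint : ∀ a b : ℝ, 0 < a → b ≤ 1 → IntegrableOn f (coneAnn η θ a b) volume := by
    intro a b ha hb1
    obtain ⟨m, M, hm, hmM⟩ := hbdd a b ha (by linarith)
    refine hIntOn f _ b (M * a ^ p) hfmeas (coneAnn_meas η θ a b)
      (coneAnn_subset_ball η θ a b) ?_
    intro x hx
    obtain ⟨hx1, hx2, -⟩ := coneAnn_mem.1 hx
    have hx0 : 0 < ‖x‖ := lt_of_lt_of_le ha hx1
    have hℓx : 0 < ℓ ‖x‖ := hℓpos _ hx0 (le_trans hx2 hb1)
    have hpow : ‖x‖ ^ p ≤ a ^ p := Real.rpow_le_rpow_of_nonpos ha hx1 hpneg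
    have hpow0 : (0:ℝ) < ‖x‖ ^ p := Real.rpow_pos_of_pos hx0 p
    have hMx : ℓ ‖x‖ ≤ M := (hmM ‖x‖ ⟨hx1, hx2⟩).2
    rw [abs_of_pos (mul_pos hℓx hpow0)]
    exact mul_le_mul hMx hpow hpow0.le (hm.le.trans ((hmM ‖x‖ ⟨hx1, hx2⟩).1.trans hMx))
  -- scaling identity
  have hscale : ∀ r : ℝ, 0 < r →
      ∫ h in coneAnn η θ (2*r) (4*r), ℓ ‖h‖ = r ^ d * ∫ u in coneAnn η θ 2 4, ℓ (r * ‖u‖) := by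
    intro r hr
    have hsmul : r • coneAnn η θ 2 4 = coneAnn η θ (2*r) (4*r) := by
      ext x
      rw [Set.mem_smul_set_iff_inv_smul_mem₀ hr.ne']
      simp only [coneAnn_mem, norm_smul, Real.norm_eq_abs, abs_of_pos (inv_pos.2 hr),
        inner_smul_left, RCLike.conj_to_real, abs_mul, abs_of_pos (inv_pos.2 hr)]
      have e1 : (2 ≤ r⁻¹ * ‖x‖) ↔ 2 * r ≤ ‖x‖ := by
        rw [inv_mul_eq_div, le_div_iff₀ hr]
      have e2 : (r⁻¹ * ‖x‖ ≤ 4) ↔ ‖x‖ ≤ 4 * r := by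
        rw [inv_mul_eq_div, div_le_iff₀ hr]
      have e3 : (Real.cos θ * (r⁻¹ * ‖x‖) ≤ r⁻¹ * |(inner ℝ x η : ℝ)|)
          ↔ Real.cos θ * ‖x‖ ≤ |(inner ℝ x η : ℝ)| := by
        rw [inv_mul_eq_div, inv_mul_eq_div, ← mul_div_assoc, div_le_div_iff₀ hr hr,
          mul_le_mul_iff_of_pos_right hr]
      rw [e1, e2, e3]
    have hcs := MeasureTheory.Measure.setIntegral_comp_smul_of_pos
      (volume : Measure (EuclideanSpace ℝ (Fin d)))
      (fun x => ℓ ‖x‖) (coneAnn η θ 2 4) hr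
    rw [hsmul] at hcs
    have hval : ∀ u : EuclideanSpace ℝ (Fin d), ℓ ‖r • u‖ = ℓ (r * ‖u‖) := by
      intro u; rw [norm_smul, Real.norm_eq_abs, abs_of_pos hr]
    simp only [hval] at hcs
    rw [finrank_euclideanSpace_fin] at hcs
    have hrd : (0:ℝ) < r ^ d := pow_pos hr d
    rw [hcs, smul_eq_mul, ← mul_assoc, mul_inv_cancel₀ hrd.ne', one_mul]
  -- volume of the unit cone annulus
  set V : ENNReal := volume (coneAnn η θ 2 4) with hV
  have hVpos : 0 < V := coneAnn_vol_pos η hη hθ0 hθπ (by norm_num) (by norm_num)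
  have hVfin : V ≠ ⊤ := coneAnn_vol_ne_top η θ 2 4
  set V' : ℝ := V.toReal with hV'
  have hV'pos : 0 < V' := ENNReal.toReal_pos hVpos.ne' hVfin
  -- the eventual Fatou bound
  have hev : ∀ᶠ r in 𝓝[>] (0:ℝ),
      r < 1/8 ∧ (V'/2) * ℓ r ≤ ∫ u in coneAnn η θ 2 4, ℓ (r * ‖u‖) := by
    rw [Filter.eventually_iff_seq_eventually]
    intro x hx
    by_contra hcon
    rw [Filter.not_eventually] at hcon
    have hx8 : ∀ᶠ n in atTop, x n ∈ Set.Ioo (0:ℝ) (1/8) :=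
      hx (Ioo_mem_nhdsGT_of_mem ⟨le_refl 0, by norm_num⟩)
    have hfreq : ∃ᶠ n in atTop, x n ∈ Set.Ioo (0:ℝ) (1/8) ∧
        ¬ ((V'/2) * ℓ (x n) ≤ ∫ u in coneAnn η θ 2 4, ℓ (x n * ‖u‖)) := by
      refine (hcon.and_eventually hx8).mono ?_
      rintro n ⟨hn1, hn2⟩
      refine ⟨hn2, fun hle => hn1 ⟨hn2.2, hle⟩⟩
    obtain ⟨φ, hφ, hP⟩ := Filter.extraction_of_frequently_atTop hfreq
    set s : ℕ → ℝ := x ∘ φ with hs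
    have hs0 : Tendsto s atTop (𝓝[>] (0:ℝ)) := hx.comp hφ.tendsto_atTop
    have hspos : ∀ n, 0 < s n := fun n => (hP n).1.1
    have hs18 : ∀ n, s n < 1/8 := fun n => (hP n).1.2
    have hℓs : ∀ n, 0 < ℓ (s n) := fun n => hℓpos _ (hspos n) (by linarith [hs18 n])
    set g : ℕ → EuclideanSpace ℝ (Fin d) → ENNReal :=
      fun n u => ENNReal.ofReal (ℓ (s n * ‖u‖) / ℓ (s n)) with hg
    have hgmeas : ∀ n, Measurable (g n) := by
      intro n
      apply Measurable.ennreal_ofReal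
      exact ((hmeas.comp (measurable_const.mul measurable_norm)).div_const _)
    -- Fatou
    have hliminf : ∀ u ∈ coneAnn η θ 2 4,
        Filter.liminf (fun n => g n u) atTop = 1 := by
      intro u hu
      have hu2 : (2:ℝ) ≤ ‖u‖ := (coneAnn_mem.1 hu).1
      have hu0 : (0:ℝ) < ‖u‖ := by linarith
      have htend : Tendsto (fun n => ℓ (‖u‖ * s n) / ℓ (s n)) atTop (𝓝 1) :=
        (hslow ‖u‖ hu0).comp hs0
      have htend' : Tendsto (fun n => g n u) atTop (𝓝 1) := by
        have : Tendsto (fun n => ENNReal.ofReal (ℓ (‖u‖ * s n) / ℓ (s n))) atTop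
            (𝓝 (ENNReal.ofReal 1)) := (ENNReal.continuous_ofReal.tendsto 1).comp htend
        simpa [hg, mul_comm] using this
      exact htend'.liminf_eq
    have hfatou : V ≤ Filter.liminf (fun n => ∫⁻ u in coneAnn η θ 2 4, g n u) atTop := by
      have h1 : V = ∫⁻ u in coneAnn η θ 2 4, (1:ENNReal) := (setLIntegral_one _).symm
      have h2 : ∫⁻ u in coneAnn η θ 2 4, (1:ENNReal)
          = ∫⁻ u in coneAnn η θ 2 4, Filter.liminf (fun n => g n u) atTop := by
        refine setLIntegral_congr_fun (coneAnn_meas η θ 2 4) ?_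
        intro u hu; exact (hliminf u hu).symm
      rw [h1, h2]
      exact lintegral_liminf_le fun n => hgmeas n
    -- upper bound of each lintegral
    have hub : ∀ n, ∫⁻ u in coneAnn η θ 2 4, g n u ≤ ENNReal.ofReal (V'/2) := by
      intro n
      have hintn : IntegrableOn (fun u => ℓ (s n * ‖u‖)) (coneAnn η θ 2 4) volume := by
        obtain ⟨m, M, hm, hmM⟩ := hbdd (2 * s n) (4 * s n) (by linarith [hspos n])
          (by linarith [hs18 n])
        refine hIntOn _ _ 4 M ((hmeas.comp (measurable_const.mul measurable_norm)))
          (coneAnn_meas η θ 2 4) (coneAnn_subset_ball η θ 2 4) ?_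
        intro u hu
        obtain ⟨h1, h2, -⟩ := coneAnn_mem.1 hu
        have harg : s n * ‖u‖ ∈ Set.Icc (2 * s n) (4 * s n) := by
          constructor <;> nlinarith [hspos n]
        have hpos' : 0 < ℓ (s n * ‖u‖) :=
          hpos _ ⟨by nlinarith [hspos n], by nlinarith [hs18 n]⟩
        rw [abs_of_pos hpos']
        exact (hmM _ harg).2
      have hnn : 0 ≤ᵐ[volume.restrict (coneAnn η θ 2 4)] fun u => ℓ (s n * ‖u‖) := by
        refine (ae_restrict_iff' (coneAnn_meas η θ 2 4)).2 (ae_of_all _ ?_)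
        intro u hu
        obtain ⟨h1, h2, -⟩ := coneAnn_mem.1 hu
        exact (hpos _ ⟨by nlinarith [hspos n], by nlinarith [hs18 n]⟩).le
      have key : ∫⁻ u in coneAnn η θ 2 4, g n u
          = ENNReal.ofReal ((ℓ (s n))⁻¹) * ∫⁻ u in coneAnn η θ 2 4,
              ENNReal.ofReal (ℓ (s n * ‖u‖)) := by
        rw [← lintegral_const_mul _ (by
          exact Measurable.ennreal_ofReal (hmeas.comp (measurable_const.mul measurable_norm)))]
        refine setLIntegral_congr_fun (coneAnn_meas η θ 2 4) ?_
        intro u hu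
        obtain ⟨h1, h2, -⟩ := coneAnn_mem.1 hu
        have hpos' : 0 ≤ ℓ (s n * ‖u‖) :=
          (hpos _ ⟨by nlinarith [hspos n], by nlinarith [hs18 n]⟩).le
        show _ = ENNReal.ofReal (ℓ (s n))⁻¹ * ENNReal.ofReal (ℓ (s n * ‖u‖))
        rw [← ENNReal.ofReal_mul (inv_nonneg.2 (hℓs n).le)]
        simp [hg, div_eq_mul_inv, mul_comm]
      have hlint : ∫⁻ u in coneAnn η θ 2 4, ENNReal.ofReal (ℓ (s n * ‖u‖))
          = ENNReal.ofReal (∫ u in coneAnn η θ 2 4, ℓ (s n * ‖u‖)) :=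
        (ofReal_integral_eq_lintegral_ofReal hintn hnn).symm
      rw [key, hlint]
      have hblt : (∫ u in coneAnn η θ 2 4, ℓ (s n * ‖u‖)) ≤ (V'/2) * ℓ (s n) :=
        (not_le.1 (hP n).2).le
      calc ENNReal.ofReal ((ℓ (s n))⁻¹) * ENNReal.ofReal (∫ u in coneAnn η θ 2 4, ℓ (s n * ‖u‖))
          ≤ ENNReal.ofReal ((ℓ (s n))⁻¹) * ENNReal.ofReal ((V'/2) * ℓ (s n)) := by
            exact mul_le_mul_right (ENNReal.ofReal_le_ofReal hblt) _
        _ = ENNReal.ofReal ((ℓ (s n))⁻¹ * ((V'/2) * ℓ (s n))) :=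
            (ENNReal.ofReal_mul (inv_nonneg.2 (hℓs n).le)).symm
        _ = ENNReal.ofReal (V'/2) := by
            congr 1
            field_simp [(hℓs n).ne']
    have hlast : Filter.liminf (fun n => ∫⁻ u in coneAnn η θ 2 4, g n u) atTop
        ≤ ENNReal.ofReal (V'/2) := by
      refine (Filter.liminf_le_liminf (Filter.Eventually.of_forall hub)).trans ?_
      simp [Filter.liminf_const]
    have hcontr : V ≤ ENNReal.ofReal (V'/2) := hfatou.trans hlast
    have : ENNReal.ofReal (V'/2) < V := by
      have : ENNReal.ofReal (V'/2) < ENNReal.ofReal V' :=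
        (ENNReal.ofReal_lt_ofReal_iff hV'pos).2 (by linarith)
      rwa [hV', ENNReal.ofReal_toReal hVfin] at this
    exact absurd hcontr (not_le.2 this)
  -- extract r₀
  obtain ⟨ε, hε, hsub⟩ := (nhdsGT_basis (0:ℝ)).eventually_iff.mp hev
  set r₀ : ℝ := min (ε/2) (1/8) with hr₀
  have hr₀pos : 0 < r₀ := lt_min (by linarith) (by norm_num)
  have hr₀ε : r₀ < ε := lt_of_le_of_lt (min_le_left _ _) (by linarith)
  have hr₀18 : r₀ ≤ 1/8 := min_le_right _ _
  -- small-case constant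
  set c₁ : ℝ := (4:ℝ) ^ p * (V'/2) with hc₁
  have hc₁pos : 0 < c₁ := mul_pos (Real.rpow_pos_of_pos (by norm_num) p) (by linarith)
  -- large-case constant
  obtain ⟨m, M, hm, hmM⟩ := hbdd (1/2) 1 (by norm_num) (by norm_num)
  set W : ENNReal := volume (coneAnn η θ (1/2) 1) with hW
  have hWpos : 0 < W := coneAnn_vol_pos η hη hθ0 hθπ (by norm_num) (by norm_num)
  have hWfin : W ≠ ⊤ := coneAnn_vol_ne_top η θ (1/2) 1
  set C₀ : ℝ := m * W.toReal with hC₀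
  have hC₀pos : 0 < C₀ := mul_pos hm (ENNReal.toReal_pos hWpos.ne' hWfin)
  obtain ⟨m₂, M₂, hm₂, hmM₂⟩ := hbdd r₀ (1/4) hr₀pos (by norm_num)
  have hM₂pos : 0 < M₂ := lt_of_lt_of_le hm₂
    ((hmM₂ r₀ ⟨le_refl _, by linarith⟩).1.trans (hmM₂ r₀ ⟨le_refl _, by linarith⟩).2)
  set c₂ : ℝ := C₀ * r₀ ^ α / M₂ with hc₂
  have hc₂pos : 0 < c₂ := by
    apply div_pos (mul_pos hC₀pos (Real.rpow_pos_of_pos hr₀pos α)) hM₂pos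
  refine ⟨min c₁ c₂, lt_min hc₁pos hc₂pos, ?_⟩
  intro r hr
  obtain ⟨hrpos, hr14⟩ := hr
  have hℓr : 0 < ℓ r := hℓpos r hrpos (by linarith)
  have hrα : 0 < r ^ α := Real.rpow_pos_of_pos hrpos α
  have hratio : 0 < ℓ r / r ^ α := div_pos hℓr hrα
  set S : Set (EuclideanSpace ℝ (Fin d)) :=
    {h : EuclideanSpace ℝ (Fin d) |
      2 * r ≤ ‖h‖ ∧ ‖h‖ ≤ 1 ∧ Real.cos θ * ‖h‖ ≤ |(inner ℝ h η : ℝ)|} with hS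
  have hSeq : S = coneAnn η θ (2*r) 1 := by
    ext h; rw [coneAnn_mem]; rfl
  have hSint : IntegrableOn f S volume := by rw [hSeq]; exact hfint _ _ (by linarith) le_rfl
  have hSnn : 0 ≤ᵐ[volume.restrict S] f := by
    rw [hSeq]
    refine (ae_restrict_iff' (coneAnn_meas η θ (2*r) 1)).2 (ae_of_all _ ?_)
    intro h hh
    obtain ⟨h1, h2, -⟩ := coneAnn_mem.1 hh
    have h0 : 0 < ‖h‖ := by linarith
    exact (mul_pos (hℓpos _ h0 h2) (Real.rpow_pos_of_pos h0 p)).le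
  rcases lt_or_ge r r₀ with hcase | hcase
  · -- small case
    have hrIoo : r ∈ Set.Ioo 0 ε := ⟨hrpos, by linarith⟩
    obtain ⟨hr18, hΦ⟩ := hsub hrIoo
    have hsubset : coneAnn η θ (2*r) (4*r) ⊆ S := by
      rw [hSeq]
      intro h hh
      obtain ⟨h1, h2, h3⟩ := coneAnn_mem.1 hh
      exact coneAnn_mem.2 ⟨h1, by linarith, h3⟩
    have step1 : ∫ h in coneAnn η θ (2*r) (4*r), f h ≤ ∫ h in S, f h :=
      setIntegral_mono_set hSint hSnn (HasSubset.Subset.eventuallyLE hsubset)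
    have h4r : (0:ℝ) < 4 * r := by linarith
    have step2 : (4*r) ^ p * ∫ h in coneAnn η θ (2*r) (4*r), ℓ ‖h‖
        ≤ ∫ h in coneAnn η θ (2*r) (4*r), f h := by
      rw [← integral_const_mul]
      refine setIntegral_mono_on ?_ ?_ (coneAnn_meas η θ (2*r) (4*r)) ?_
      · have hint := hfint (2*r) (4*r) (by linarith) (by linarith)
        -- integrability of const * ℓ‖h‖ on the annulus
        obtain ⟨m', M', hm', hmM'⟩ := hbdd (2*r) (4*r) (by linarith) (by linarith)
        have : IntegrableOn (fun h : EuclideanSpace ℝ (Fin d) => ℓ ‖h‖)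
            (coneAnn η θ (2*r) (4*r)) volume := by
          refine hIntOn _ _ (4*r) M' (hmeas.comp measurable_norm)
            (coneAnn_meas η θ (2*r) (4*r)) (coneAnn_subset_ball η θ (2*r) (4*r)) ?_
          intro x hx
          obtain ⟨h1, h2, -⟩ := coneAnn_mem.1 hx
          have h0 : 0 < ‖x‖ := by linarith
          rw [abs_of_pos (hℓpos _ h0 (by linarith))]
          exact (hmM' _ ⟨h1, h2⟩).2
        exact this.const_mul _
      · exact (hfint (2*r) (4*r) (by linarith) (by linarith))
      · intro h hh
        obtain ⟨h1, h2, -⟩ := coneAnn_mem.1 hh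
        have h0 : 0 < ‖h‖ := by linarith
        have hpow : (4*r) ^ p ≤ ‖h‖ ^ p := Real.rpow_le_rpow_of_nonpos h0 h2 hpneg
        have hℓh : 0 ≤ ℓ ‖h‖ := (hℓpos _ h0 (by linarith)).le
        calc (4*r) ^ p * ℓ ‖h‖ ≤ ‖h‖ ^ p * ℓ ‖h‖ :=
              mul_le_mul_of_nonneg_right hpow hℓh
          _ = f h := by rw [hf]; ring
    have step3 : (V'/2) * ℓ r * r ^ d ≤ ∫ h in coneAnn η θ (2*r) (4*r), ℓ ‖h‖ := by
      rw [hscale r hrpos]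
      have hrd : (0:ℝ) < r ^ d := pow_pos hrpos d
      have h1 : (V'/2) * ℓ r * r ^ d ≤ (∫ u in coneAnn η θ 2 4, ℓ (r * ‖u‖)) * r ^ d :=
        mul_le_mul_of_nonneg_right hΦ hrd.le
      linarith [h1, (mul_comm (∫ u in coneAnn η θ 2 4, ℓ (r * ‖u‖)) ((r:ℝ) ^ d))]
    -- combine
    have hchain : (4*r) ^ p * ((V'/2) * ℓ r * r ^ d) ≤ ∫ h in S, f h := by
      have h4rp : (0:ℝ) < (4*r) ^ p := Real.rpow_pos_of_pos h4r p
      calc (4*r) ^ p * ((V'/2) * ℓ r * r ^ d)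
          ≤ (4*r) ^ p * ∫ h in coneAnn η θ (2*r) (4*r), ℓ ‖h‖ :=
            mul_le_mul_of_nonneg_left step3 h4rp.le
        _ ≤ ∫ h in coneAnn η θ (2*r) (4*r), f h := step2
        _ ≤ ∫ h in S, f h := step1
    have hid : (4*r) ^ p * ((V'/2) * ℓ r * r ^ d) = c₁ * (ℓ r / r ^ α) := by
      rw [hc₁, Real.mul_rpow (by norm_num) hrpos.le]
      have hrd : (r:ℝ) ^ d = r ^ ((d:ℝ)) := (Real.rpow_natCast r d).symm
      rw [hrd]
      have key : r ^ p * r ^ ((d:ℝ)) = (r ^ α)⁻¹ := by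
        rw [← Real.rpow_add hrpos, ← Real.rpow_neg hrpos.le]
        congr 1
        rw [hp]; ring
      calc (4:ℝ) ^ p * r ^ p * (V' / 2 * ℓ r * r ^ ((d:ℝ)))
          = (4:ℝ) ^ p * (V'/2) * ℓ r * (r ^ p * r ^ ((d:ℝ))) := by ring
        _ = (4:ℝ) ^ p * (V'/2) * ℓ r * (r ^ α)⁻¹ := by rw [key]
        _ = (4:ℝ) ^ p * (V'/2) * (ℓ r / r ^ α) := by rw [div_eq_mul_inv]; ring
    calc min c₁ c₂ * (ℓ r / r ^ α) ≤ c₁ * (ℓ r / r ^ α) :=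
          mul_le_mul_of_nonneg_right (min_le_left _ _) hratio.le
      _ = (4*r) ^ p * ((V'/2) * ℓ r * r ^ d) := hid.symm
      _ ≤ ∫ h in S, f h := hchain
  · -- large case
    have hsubset : coneAnn η θ (1/2) 1 ⊆ S := by
      rw [hSeq]
      intro h hh
      obtain ⟨h1, h2, h3⟩ := coneAnn_mem.1 hh
      exact coneAnn_mem.2 ⟨by linarith, h2, h3⟩
    have step1 : ∫ h in coneAnn η θ (1/2) 1, f h ≤ ∫ h in S, f h :=
      setIntegral_mono_set hSint hSnn (HasSubset.Subset.eventuallyLE hsubset)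
    have step2 : C₀ ≤ ∫ h in coneAnn η θ (1/2) 1, f h := by
      have hconst : ∫ _ in coneAnn η θ (1/2) 1, m = W.toReal * m := by
        rw [setIntegral_const, smul_eq_mul, measureReal_def]
      have hmono : ∫ _ in coneAnn η θ (1/2) 1, m ≤ ∫ h in coneAnn η θ (1/2) 1, f h := by
        refine setIntegral_mono_on (integrableOn_const
            ((measure_mono (coneAnn_subset_ball η θ (1/2) 1)).trans_lt
              measure_closedBall_lt_top).ne)
          (hfint (1/2) 1 (by norm_num) le_rfl) (coneAnn_meas η θ (1/2) 1) ?_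
        · intro h hh
          obtain ⟨h1, h2, -⟩ := coneAnn_mem.1 hh
          have h0 : 0 < ‖h‖ := by linarith
          have hpow : 1 ≤ ‖h‖ ^ p :=
            Real.one_le_rpow_of_pos_of_le_one_of_nonpos h0 h2 hpneg
          have hℓh : m ≤ ℓ ‖h‖ := (hmM _ ⟨h1, h2⟩).1
          calc m = m * 1 := (mul_one m).symm
            _ ≤ ℓ ‖h‖ * ‖h‖ ^ p := mul_le_mul hℓh hpow zero_le_one (hm.le.trans hℓh)
      rw [hconst] at hmono
      rw [hC₀]
      calc m * W.toReal = W.toReal * m := by ring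
        _ ≤ _ := hmono
    have hub : ℓ r / r ^ α ≤ M₂ / r₀ ^ α := by
      have hℓM : ℓ r ≤ M₂ := (hmM₂ r ⟨hcase, hr14.le⟩).2
      have hrr : r₀ ^ α ≤ r ^ α := Real.rpow_le_rpow hr₀pos.le hcase hα0.le
      exact div_le_div₀ (by linarith) hℓM (Real.rpow_pos_of_pos hr₀pos α) hrr
    have hc₂id : c₂ * (M₂ / r₀ ^ α) = C₀ := by
      rw [hc₂]
      field_simp
    calc min c₁ c₂ * (ℓ r / r ^ α) ≤ c₂ * (ℓ r / r ^ α) :=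
          mul_le_mul_of_nonneg_right (min_le_right _ _) hratio.le
      _ ≤ c₂ * (M₂ / r₀ ^ α) := mul_le_mul_of_nonneg_left hub hc₂pos.le
      _ = C₀ := hc₂id
      _ ≤ ∫ h in coneAnn η θ (1/2) 1, f h := step2
      _ ≤ ∫ h in S, f h := step1
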